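/- Let \Delta be the coproduct on Z\langle a,b\rangle determined by \Delta(1)=0, \Delta(a)=\Delta(b)=1\otimes 1 and the Newtonian condition \Delta(uv) = \sum u_{(1)} \otimes u_{(2)}v + \sum uv_{(1)} \otimes v_{(2)}. Then for an ab-monomial u = u_1...u_n, \Delta(u) = \sum_{i=1}^n u_1...u_{i-1} \otimes u_{i+1}...u_n, and \Delta is coassociative. -/

import Mathlib

open TensorProduct

/-- The ring `ℤ⟨a,b⟩`, realized as the monoid algebra of the free monoid on two
letters (`false` encodes `a`, `true` encodes `b`). -/
abbrev AB : Type := MonoidAlgebra ℤ (FreeMonoid Bool)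

/-- The variable `a`. -/
noncomputable def aV : AB := MonoidAlgebra.single (FreeMonoid.ofList [false]) 1

/-- The variable `b`. -/
noncomputable def bV : AB := MonoidAlgebra.single (FreeMonoid.ofList [true]) 1

/-- A linear coproduct on `ℤ⟨a,b⟩` satisfying `Δ(1) = 0`, `Δ(a) = Δ(b) = 1 ⊗ 1` and
the Newtonian condition `Δ(uv) = ∑ u₍₁₎ ⊗ u₍₂₎v + ∑ uv₍₁₎ ⊗ v₍₂₎` is given on an
`ab`-monomial `u = u₁⋯uₙ` by `Δ(u) = ∑ᵢ u₁⋯u_{i-1} ⊗ u_{i+1}⋯uₙ`, and it is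
coassociative. -/
theorem newtonian_coproduct_deletion_and_coassoc
    (D : AB →ₗ[ℤ] AB ⊗[ℤ] AB)
    (h1 : D 1 = 0) (ha : D aV = 1 ⊗ₜ[ℤ] 1) (hb : D bV = 1 ⊗ₜ[ℤ] 1)
    (hnewton : ∀ u v : AB, D (u * v) = D u * (1 ⊗ₜ[ℤ] v) + (u ⊗ₜ[ℤ] 1) * D v) :
    (∀ l : List Bool,
      D (MonoidAlgebra.single (FreeMonoid.ofList l) 1) =
        ∑ i ∈ Finset.range l.length,
          (MonoidAlgebra.single (FreeMonoid.ofList (l.take i)) (1 : ℤ)) ⊗ₜ[ℤ]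
            (MonoidAlgebra.single (FreeMonoid.ofList (l.drop (i + 1))) (1 : ℤ))) ∧
    (∀ w : AB,
      (TensorProduct.assoc ℤ AB AB AB) ((TensorProduct.map D LinearMap.id) (D w)) =
        (TensorProduct.map LinearMap.id D) (D w)) := by
  set S : List Bool → AB := fun l => MonoidAlgebra.single (FreeMonoid.ofList l) 1 with hS
  have Snil : S [] = 1 := (MonoidAlgebra.one_def).symm
  have Smul : ∀ l₁ l₂ : List Bool, S l₁ * S l₂ = S (l₁ ++ l₂) := by
    intro l₁ l₂
    simp only [hS, MonoidAlgebra.single_mul_single, one_mul]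
    rfl
  have hone : ∀ x : Bool, D (S [x]) = 1 ⊗ₜ[ℤ] 1 := by
    intro x; cases x
    · exact ha
    · exact hb
  have part1 : ∀ l : List Bool,
      D (S l) = ∑ i ∈ Finset.range l.length, S (l.take i) ⊗ₜ[ℤ] S (l.drop (i + 1)) := by
    intro l
    induction l with
    | nil => simpa [Snil] using h1
    | cons x t ih =>
      have hsplit : S (x :: t) = S [x] * S t := by rw [Smul]; rfl
      rw [hsplit, hnewton, hone, ih, List.length_cons, Finset.sum_range_succ',
        Finset.mul_sum]
      simp only [Algebra.TensorProduct.tmul_mul_tmul, one_mul, mul_one, Smul]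
      rw [add_comm]
      simp [Snil]
  have part2 : ∀ w : AB,
      (TensorProduct.assoc ℤ AB AB AB) ((TensorProduct.map D LinearMap.id) (D w)) =
        (TensorProduct.map LinearMap.id D) (D w) := by
    letI : Module ℤ (AB ⊗[ℤ] AB) := TensorProduct.instModule
    have key : ∀ l : List Bool,
        (TensorProduct.assoc ℤ AB AB AB) ((TensorProduct.map D LinearMap.id) (D (S l))) =
          (TensorProduct.map LinearMap.id D) (D (S l)) := by
      intro l
      set n := l.length with hn
      rw [part1, map_sum, map_sum]
      erw [map_sum]
      simp only [TensorProduct.map_tmul, LinearMap.id_coe, id_eq]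
      have dtake : ∀ i ∈ Finset.range n, D (S (l.take i)) =
          ∑ j ∈ Finset.range i, S (l.take j) ⊗ₜ[ℤ] S ((l.drop (j+1)).take (i - (j+1))) := by
        intro i hi
        rw [part1]
        have hlen : (l.take i).length = i := by
          rw [List.length_take]
          exact min_eq_left (le_of_lt (Finset.mem_range.mp hi))
        rw [hlen]
        refine Finset.sum_congr rfl fun j hj => ?_
        have hji : j < i := Finset.mem_range.mp hj
        rw [List.take_take, min_eq_left (le_of_lt hji), List.drop_take]
      have ddrop : ∀ j : ℕ, D (S (l.drop (j+1))) =
          ∑ k ∈ Finset.range (n - (j+1)),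
            S ((l.drop (j+1)).take k) ⊗ₜ[ℤ] S ((l.drop (j+1)).drop (k+1)) := by
        intro j
        rw [part1, List.length_drop]
      calc ∑ i ∈ Finset.range n,
            (TensorProduct.assoc ℤ AB AB AB) (D (S (l.take i)) ⊗ₜ[ℤ] S (l.drop (i+1)))
          = ∑ i ∈ Finset.range n, ∑ j ∈ Finset.range i,
              S (l.take j) ⊗ₜ[ℤ] (S ((l.drop (j+1)).take (i - (j+1))) ⊗ₜ[ℤ] S (l.drop (i+1))) := by
            refine Finset.sum_congr rfl fun i hi => ?_
            rw [dtake i hi, TensorProduct.sum_tmul, map_sum]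
            simp [TensorProduct.assoc_tmul]
        _ = ∑ j ∈ Finset.range n, ∑ k ∈ Finset.range (n - (j+1)),
              S (l.take j) ⊗ₜ[ℤ] (S ((l.drop (j+1)).take k) ⊗ₜ[ℤ] S ((l.drop (j+1)).drop (k+1))) := by
            rw [Finset.sum_sigma', Finset.sum_sigma']
            refine Finset.sum_nbij' (fun p => ⟨p.2, p.1 - (p.2 + 1)⟩)
              (fun p => ⟨p.1 + 1 + p.2, p.1⟩) ?_ ?_ ?_ ?_ ?_
            · rintro ⟨i, j⟩ h
              simp only [Finset.mem_sigma, Finset.mem_range] at h ⊢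
              omega
            · rintro ⟨j, k⟩ h
              simp only [Finset.mem_sigma, Finset.mem_range] at h ⊢
              omega
            · rintro ⟨i, j⟩ h
              simp only [Finset.mem_sigma, Finset.mem_range] at h
              simp only [Sigma.mk.inj_iff, heq_eq_eq]
              exact ⟨by omega, trivial⟩
            · rintro ⟨j, k⟩ h
              simp only [Finset.mem_sigma, Finset.mem_range] at h
              simp only [Sigma.mk.inj_iff, heq_eq_eq]
              exact ⟨trivial, by omega⟩
            · rintro ⟨i, j⟩ h
              simp only [Finset.mem_sigma, Finset.mem_range] at h
              have hd : l.drop (i + 1) = (l.drop (j+1)).drop ((i - (j+1)) + 1) := by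
                rw [List.drop_drop]
                congr 1
                omega
              rw [hd]
        _ = ∑ j ∈ Finset.range n, S (l.take j) ⊗ₜ[ℤ] D (S (l.drop (j+1))) := by
            refine Finset.sum_congr rfl fun j hj => ?_
            rw [ddrop j, TensorProduct.tmul_sum]
    intro w
    have hlin : ((TensorProduct.assoc ℤ AB AB AB).toLinearMap ∘ₗ
        (TensorProduct.map D LinearMap.id) ∘ₗ D) =
        ((TensorProduct.map LinearMap.id D) ∘ₗ D) := by
      refine MonoidAlgebra.lhom_ext' fun g => LinearMap.ext fun c => ?_
      have hg : MonoidAlgebra.single g c = c • S g.toList := by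
        simp [hS, MonoidAlgebra.smul_single']
      change (TensorProduct.assoc ℤ AB AB AB) ((TensorProduct.map D LinearMap.id) (D (MonoidAlgebra.single g c))) =
        (TensorProduct.map LinearMap.id D) (D (MonoidAlgebra.single g c))
      simp only [LinearMap.comp_apply, MonoidAlgebra.lsingle_apply, LinearEquiv.coe_coe, hg, map_smul]
      erw [map_smul, map_smul, map_smul]
      exact congrArg (fun z => c • z) (key g.toList)
    exact LinearMap.congr_fun hlin w
  exact ⟨fun l => part1 l, part2⟩
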